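/- If two metric trees with the same leaf set {1,...,n} (n ≥ 3), with strictly positive edge lengths and no vertices of degree 2, induce the same pairwise distance function on leaves, then they are isomorphic as metric trees (the 2-dissimilarity vector determines the tree). -/

import Mathlib

open SimpleGraph Finset

structure MetricTree (n : ℕ) where
  V : Type
  [fintypeV : Fintype V]
  [decEqV : DecidableEq V]
  G : SimpleGraph V
  isTree : G.IsTree
  leaf : Fin (n + 1) → V
  leaf_inj : Function.Injective leaf
  len : Sym2 V → ℝ
  len_nonneg : ∀ e, 0 ≤ len e

attribute [instance] MetricTree.fintypeV MetricTree.decEqV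

namespace MetricTree

variable {n : ℕ}

/-- The unique path between two vertices of the tree. -/
noncomputable def path (T : MetricTree n) (v w : T.V) : T.G.Walk v w :=
  (T.isTree.existsUnique_path v w).choose

open scoped Classical in
/-- The edges of the convex hull (minimal subtree) of a set of vertices. -/
noncomputable def hullEdges (T : MetricTree n) (S : Set T.V) : Finset (Sym2 T.V) :=
  Finset.univ.filter fun e => ∃ a ∈ S, ∃ b ∈ S, e ∈ (T.path a b).edges

/-- Total length of the convex hull of a set of vertices. -/
noncomputable def steiner (T : MetricTree n) (S : Set T.V) : ℝ :=
  ∑ e ∈ T.hullEdges S, T.len e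

/-- Path distance between two vertices. -/
noncomputable def dist (T : MetricTree n) (a b : T.V) : ℝ := T.steiner {a, b}

/-- Rooted Steiner tree length `d_{0,σ}` for a set `σ ⊆ {1,…,n}` of leaf labels. -/
noncomputable def d0 (T : MetricTree n) (σ : Set (Fin n)) : ℝ :=
  T.steiner (insert (T.leaf 0) ((fun i => T.leaf i.succ) '' σ))

end MetricTree

/-- The (unordered) degree of a vertex. -/
noncomputable def MetricTree.deg {n : ℕ} (T : MetricTree n) (v : T.V) : ℕ :=
  (T.G.neighborSet v).ncard

/-- Isomorphism of metric trees: a bijection of vertices preserving adjacency,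
edge lengths and the leaf labelling. -/
def MetricTree.Isom {n : ℕ} (T₁ T₂ : MetricTree n) : Prop :=
  ∃ φ : T₁.V ≃ T₂.V,
    (∀ a b, T₁.G.Adj a b ↔ T₂.G.Adj (φ a) (φ b)) ∧
    (∀ a b, T₁.G.Adj a b → T₁.len s(a, b) = T₂.len s(φ a, φ b)) ∧
    (∀ i, φ (T₁.leaf i) = T₂.leaf i)

/- ===================== Auxiliary development ===================== -/

/-- Sum of a nonneg function over a nodup list contained in another list. -/
lemma aux_sum_map_le {α : Type*} [DecidableEq α] {l₁ l₂ : List α} (f : α → ℝ)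
    (h0 : ∀ a ∈ l₂, 0 ≤ f a) (hn : l₁.Nodup) (hs : l₁ ⊆ l₂) :
    (l₁.map f).sum ≤ (l₂.map f).sum := by
  calc (l₁.map f).sum = l₁.toFinset.sum f := (List.sum_toFinset f hn).symm
    _ ≤ l₂.toFinset.sum f := by
        refine Finset.sum_le_sum_of_subset_of_nonneg ?_ (fun a ha _ => ?_)
        · intro a ha
          simp only [List.mem_toFinset] at ha ⊢
          exact hs ha
        · exact h0 a (by simpa using ha)
    _ = (l₂.dedup.map f).sum := by
        have h : l₂.dedup.toFinset = l₂.toFinset := by ext x; simp [List.mem_dedup]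
        rw [← h]
        exact List.sum_toFinset f (List.nodup_dedup l₂)
    _ ≤ (l₂.map f).sum :=
        List.Sublist.sum_le_sum ((l₂.dedup_sublist).map f)
          (by intro a ha; obtain ⟨b, hb, rfl⟩ := List.mem_map.1 ha; exact h0 b hb)

lemma aux_toFinset_sum_le {α : Type*} [DecidableEq α] {l : List α} (f : α → ℝ)
    (h0 : ∀ a ∈ l, 0 ≤ f a) : l.toFinset.sum f ≤ (l.map f).sum := by
  calc l.toFinset.sum f = (l.dedup.map f).sum := by
        have h : l.dedup.toFinset = l.toFinset := by ext x; simp [List.mem_dedup]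
        rw [← h]; exact List.sum_toFinset f (List.nodup_dedup l)
    _ ≤ (l.map f).sum :=
        List.Sublist.sum_le_sum ((l.dedup_sublist).map f)
          (by intro a ha; obtain ⟨b, hb, rfl⟩ := List.mem_map.1 ha; exact h0 b hb)

namespace MetricTree

variable {n : ℕ} (T : MetricTree n)

lemma path_isPath (v w : T.V) : (T.path v w).IsPath :=
  (T.isTree.existsUnique_path v w).choose_spec.1

lemma path_unique {v w : T.V} (p : T.G.Walk v w) (hp : p.IsPath) : p = T.path v w :=
  (T.isTree.existsUnique_path v w).choose_spec.2 p hp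

/-- Length of a walk as the sum of edge lengths. -/
noncomputable def wlen {v w : T.V} (p : T.G.Walk v w) : ℝ := (p.edges.map T.len).sum

lemma wlen_nonneg {v w : T.V} (p : T.G.Walk v w) : 0 ≤ T.wlen p := by
  apply List.sum_nonneg
  intro a ha
  obtain ⟨b, _, rfl⟩ := List.mem_map.1 ha
  exact T.len_nonneg b

lemma wlen_append {u v w : T.V} (p : T.G.Walk u v) (q : T.G.Walk v w) :
    T.wlen (p.append q) = T.wlen p + T.wlen q := by
  simp [wlen, SimpleGraph.Walk.edges_append]

lemma wlen_reverse {u v : T.V} (p : T.G.Walk u v) : T.wlen p.reverse = T.wlen p := by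
  simp [wlen, SimpleGraph.Walk.edges_reverse, List.map_reverse, List.sum_reverse]

lemma path_self (v : T.V) : T.path v v = SimpleGraph.Walk.nil :=
  (T.path_unique SimpleGraph.Walk.nil (SimpleGraph.Walk.IsPath.nil)).symm

lemma path_symm (v w : T.V) : T.path w v = (T.path v w).reverse :=
  (T.path_unique _ ((T.path_isPath v w).reverse)).symm

lemma mem_path_symm {a b x : T.V} (h : x ∈ (T.path a b).support) :
    x ∈ (T.path b a).support := by
  rw [path_symm, SimpleGraph.Walk.support_reverse, List.mem_reverse]; exact h

lemma dist_eq_wlen (a b : T.V) : T.dist a b = T.wlen (T.path a b) := by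
  have h : T.hullEdges {a, b} = (T.path a b).edges.toFinset := by
    ext e
    simp only [hullEdges, Finset.mem_filter, Finset.mem_univ, true_and, List.mem_toFinset]
    constructor
    · rintro ⟨x, hx, y, hy, he⟩
      simp only [Set.mem_insert_iff, Set.mem_singleton_iff] at hx hy
      rcases hx with rfl | rfl <;> rcases hy with rfl | rfl <;>
        first
          | (rw [T.path_self] at he; simp at he)
          | exact he
          | (rw [path_symm, SimpleGraph.Walk.edges_reverse, List.mem_reverse] at he
             exact he)
    · intro he
      exact ⟨a, by simp, b, by simp, he⟩
  rw [dist, steiner, h, wlen]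
  exact List.sum_toFinset T.len (T.path_isPath a b).isTrail.edges_nodup

lemma dist_self (a : T.V) : T.dist a a = 0 := by
  rw [dist_eq_wlen, path_self]; simp [wlen]

lemma dist_comm (a b : T.V) : T.dist a b = T.dist b a := by
  rw [dist_eq_wlen, dist_eq_wlen, T.path_symm b a, wlen_reverse]

lemma dist_nonneg (a b : T.V) : 0 ≤ T.dist a b := by
  rw [dist_eq_wlen]; exact T.wlen_nonneg _

/-- Splitting the path at an interior point. -/
lemma path_take {a b c : T.V} (hc : c ∈ (T.path a b).support) :
    (T.path a b).takeUntil c hc = T.path a c :=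
  T.path_unique _ ((T.path_isPath a b).takeUntil hc)

lemma path_drop {a b c : T.V} (hc : c ∈ (T.path a b).support) :
    (T.path a b).dropUntil c hc = T.path c b :=
  T.path_unique _ ((T.path_isPath a b).dropUntil hc)

lemma dist_add_of_mem {a b c : T.V} (hc : c ∈ (T.path a b).support) :
    T.dist a b = T.dist a c + T.dist c b := by
  rw [dist_eq_wlen, dist_eq_wlen, dist_eq_wlen]
  rw [← T.path_take hc, ← T.path_drop hc, ← T.wlen_append]
  rw [SimpleGraph.Walk.take_spec]

lemma dist_triangle (a c b : T.V) : T.dist a b ≤ T.dist a c + T.dist c b := by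
  set W := (T.path a c).append (T.path c b) with hW
  have hbp : W.bypass = T.path a b := T.path_unique _ W.bypass_isPath
  have h1 : T.wlen W.bypass ≤ T.wlen W := by
    apply aux_sum_map_le
    · intro e _; exact T.len_nonneg e
    · exact W.bypass_isPath.isTrail.edges_nodup
    · exact W.edges_bypass_subset
  rw [dist_eq_wlen, ← hbp]
  calc T.wlen W.bypass ≤ T.wlen W := h1
    _ = T.dist a c + T.dist c b := by
        rw [hW, T.wlen_append, dist_eq_wlen, dist_eq_wlen]

section Pos

variable (hpos : ∀ e ∈ T.G.edgeSet, 0 < T.len e)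
include hpos

lemma dist_pos {a b : T.V} (hab : a ≠ b) : 0 < T.dist a b := by
  obtain ⟨w, hadj, q, hq⟩ := SimpleGraph.Walk.exists_eq_cons_of_ne hab (T.path a b)
  rw [dist_eq_wlen, hq]
  have h1 : T.wlen (SimpleGraph.Walk.cons hadj q) = T.len s(a, w) + T.wlen q := by
    simp [wlen, SimpleGraph.Walk.edges_cons]
  rw [h1]
  have h2 : 0 < T.len s(a, w) := hpos _ hadj
  have h3 : 0 ≤ T.wlen q := T.wlen_nonneg q
  linarith

lemma dist_eq_zero_iff {a b : T.V} : T.dist a b = 0 ↔ a = b := by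
  constructor
  · intro h
    by_contra hab
    exact absurd h (T.dist_pos hpos hab).ne'
  · rintro rfl; exact T.dist_self a

/-- Equality in the triangle inequality puts the middle point on the path. -/
lemma mem_path_of_dist_eq {a b c : T.V}
    (h : T.dist a c + T.dist c b = T.dist a b) : c ∈ (T.path a b).support := by
  by_cases hca : c = a
  · subst hca; exact SimpleGraph.Walk.start_mem_support _
  set W := (T.path a c).append (T.path c b) with hWdef
  have hbp : W.bypass = T.path a b := T.path_unique _ W.bypass_isPath
  have hwlenW : T.wlen W = T.dist a b := by
    rw [hWdef, T.wlen_append, ← dist_eq_wlen, ← dist_eq_wlen, h]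
  have hsub : (T.path a b).edges.toFinset ⊆ W.edges.toFinset := by
    intro e he
    rw [List.mem_toFinset] at he ⊢
    rw [← hbp] at he
    exact W.edges_bypass_subset he
  have e1 : T.dist a b = ∑ e ∈ (T.path a b).edges.toFinset, T.len e := by
    rw [dist_eq_wlen, wlen]
    exact (List.sum_toFinset T.len (T.path_isPath a b).isTrail.edges_nodup).symm
  have e2 : ∑ e ∈ W.edges.toFinset, T.len e ≤ T.wlen W :=
    aux_toFinset_sum_le T.len (fun e _ => T.len_nonneg e)
  have e3 : ∑ e ∈ (T.path a b).edges.toFinset, T.len e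
      ≤ ∑ e ∈ W.edges.toFinset, T.len e :=
    Finset.sum_le_sum_of_subset_of_nonneg hsub (fun e _ _ => T.len_nonneg e)
  have heq : ∑ e ∈ W.edges.toFinset, T.len e
      = ∑ e ∈ (T.path a b).edges.toFinset, T.len e := by linarith [e1, e2, e3, hwlenW]
  have hdiffzero : ∑ e ∈ W.edges.toFinset \ (T.path a b).edges.toFinset, T.len e = 0 := by
    have := Finset.sum_sdiff (f := T.len) hsub
    linarith [this, heq]
  have hdiffempty : W.edges.toFinset \ (T.path a b).edges.toFinset = ∅ := by
    by_contra hne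
    obtain ⟨e, he⟩ := Finset.nonempty_of_ne_empty hne
    have hposall : ∀ x ∈ W.edges.toFinset \ (T.path a b).edges.toFinset, 0 < T.len x := by
      intro x hx
      have hx' : x ∈ W.edges := List.mem_toFinset.1 (Finset.mem_sdiff.1 hx).1
      exact hpos x (W.edges_subset_edgeSet hx')
    have := Finset.sum_pos hposall ⟨e, he⟩
    linarith [hdiffzero]
  have hWsub : W.edges.toFinset ⊆ (T.path a b).edges.toFinset := by
    intro e he
    by_contra hne
    have : e ∈ W.edges.toFinset \ (T.path a b).edges.toFinset :=
      Finset.mem_sdiff.2 ⟨he, hne⟩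
    rw [hdiffempty] at this
    exact absurd this (Finset.notMem_empty e)
  -- take the first edge of the path c → a; it is incident to c
  obtain ⟨x, hadj, q, hq⟩ := SimpleGraph.Walk.exists_eq_cons_of_ne hca (T.path c a)
  have hmem : s(c, x) ∈ (T.path a c).edges := by
    rw [T.path_symm c a, SimpleGraph.Walk.edges_reverse, List.mem_reverse, hq,
      SimpleGraph.Walk.edges_cons]
    simp
  have hmemW : s(c, x) ∈ W.edges := by
    rw [hWdef, SimpleGraph.Walk.edges_append, List.mem_append]
    exact Or.inl hmem
  have : s(c, x) ∈ (T.path a b).edges := by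
    have := hWsub (List.mem_toFinset.2 hmemW)
    exact List.mem_toFinset.1 this
  exact (T.path a b).fst_mem_support_of_mem_edges this

end Pos

/-- For two points on a common path, one lies between the start and the other. -/
lemma dist_ordering {a b x y : T.V} (hx : x ∈ (T.path a b).support)
    (hy : y ∈ (T.path a b).support) :
    T.dist a y = T.dist a x + T.dist x y ∨ T.dist a x = T.dist a y + T.dist y x := by
  have hsplit := SimpleGraph.Walk.take_spec (T.path a b) hx
  have hy' : y ∈ ((T.path a b).takeUntil x hx).support
      ∨ y ∈ ((T.path a b).dropUntil x hx).support := by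
    rw [← SimpleGraph.Walk.mem_support_append_iff, hsplit]; exact hy
  rcases hy' with h | h
  · rw [T.path_take hx] at h
    right
    exact T.dist_add_of_mem h
  · rw [T.path_drop hx] at h
    left
    have h1 : T.dist x b = T.dist x y + T.dist y b := T.dist_add_of_mem h
    have h2 : T.dist a b = T.dist a x + T.dist x b := T.dist_add_of_mem hx
    have h3 : T.dist a b = T.dist a y + T.dist y b := by
      apply T.dist_add_of_mem
      have := SimpleGraph.Walk.support_dropUntil_subset (T.path a b) hx
      rw [T.path_drop hx] at this
      exact this h
    linarith

/-- Gluing two paths that only share their common endpoint gives a path. -/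
lemma isPath_append {a c b : T.V} {q : T.G.Walk a c} {r : T.G.Walk c b}
    (hq : q.IsPath) (hr : r.IsPath)
    (hint : ∀ x, x ∈ q.support → x ∈ r.support → x = c) : (q.append r).IsPath := by
  rw [SimpleGraph.Walk.isPath_def, SimpleGraph.Walk.support_append]
  apply List.Nodup.append hq.support_nodup
  · have := hr.support_nodup
    rw [SimpleGraph.Walk.support_eq_cons r] at this
    exact this.tail
  · intro v hv1 hv2
    have hv2' : v ∈ r.support := by
      rw [SimpleGraph.Walk.support_eq_cons r]
      exact List.mem_cons_of_mem _ hv2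
    have hvc : v = c := hint v hv1 hv2'
    subst hvc
    have := hr.support_nodup
    rw [SimpleGraph.Walk.support_eq_cons r] at this
    exact (List.nodup_cons.1 this).1 hv2

/-- Points on the two halves of a path agree only at the splitting point. -/
lemma eq_of_mem_both {a b c x : T.V} (hc : c ∈ (T.path a b).support)
    (h1 : x ∈ (T.path a c).support) (h2 : x ∈ (T.path c b).support) : x = c := by
  by_contra hxc
  have hsplit := SimpleGraph.Walk.take_spec (T.path a b) hc
  have hnodup : (((T.path a b).takeUntil c hc).support
      ++ ((T.path a b).dropUntil c hc).support.tail).Nodup := by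
    have := (T.path_isPath a b).support_nodup
    rw [← hsplit, SimpleGraph.Walk.support_append] at this
    exact this
  have hx1 : x ∈ ((T.path a b).takeUntil c hc).support := by
    rw [T.path_take hc]; exact h1
  have hx2 : x ∈ ((T.path a b).dropUntil c hc).support.tail := by
    rw [T.path_drop hc]
    have := h2
    rw [SimpleGraph.Walk.support_eq_cons (T.path c b)] at this
    rcases List.mem_cons.1 this with h | h
    · exact absurd h hxc
    · exact h
  rw [List.nodup_append] at hnodup
  exact hnodup.2.2 x hx1 x hx2 rfl

section Struct

variable (hpos : ∀ e ∈ T.G.edgeSet, 0 < T.len e)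
include hpos

lemma path_cons_of_adj {a b w : T.V} (hadj : T.G.Adj a w)
    (hw : w ∈ (T.path a b).support) :
    T.path a b = SimpleGraph.Walk.cons hadj (T.path w b) := by
  have hna : a ∉ (T.path w b).support := by
    intro ha
    have h1 : T.dist w b = T.dist w a + T.dist a b := T.dist_add_of_mem ha
    have h2 : T.dist a b = T.dist a w + T.dist w b := T.dist_add_of_mem hw
    have h3 : T.dist a w = T.dist w a := T.dist_comm a w
    have h4 : 0 < T.dist a w := T.dist_pos hpos hadj.ne
    linarith
  exact (T.path_unique _ ((T.path_isPath w b).cons hna)).symm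

lemma adj_eq_of_mem_support {a b w₁ w₂ : T.V} (h₁ : T.G.Adj a w₁)
    (hm₁ : w₁ ∈ (T.path a b).support) (h₂ : T.G.Adj a w₂)
    (hm₂ : w₂ ∈ (T.path a b).support) : w₁ = w₂ := by
  have e1 := T.path_cons_of_adj hpos h₁ hm₁
  have e2 := T.path_cons_of_adj hpos h₂ hm₂
  have hsupp : (SimpleGraph.Walk.cons h₁ (T.path w₁ b)).support
      = (SimpleGraph.Walk.cons h₂ (T.path w₂ b)).support := by rw [← e1, ← e2]
  rw [SimpleGraph.Walk.support_cons, SimpleGraph.Walk.support_cons,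
    SimpleGraph.Walk.support_eq_cons (T.path w₁ b),
    SimpleGraph.Walk.support_eq_cons (T.path w₂ b)] at hsupp
  simp only [List.cons.injEq] at hsupp
  exact hsupp.2.1

end Struct

lemma path_support_subset {v y x : T.V} (hx : x ∈ (T.path v y).support) :
    (T.path v x).support ⊆ (T.path v y).support := by
  have := SimpleGraph.Walk.support_takeUntil_subset (T.path v y) hx
  rw [T.path_take hx] at this; exact this

section Struct2

variable (hpos : ∀ e ∈ T.G.edgeSet, 0 < T.len e)
include hpos

lemma adj_mem_sub {v z x w : T.V} (hadj : T.G.Adj v w)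
    (hw : w ∈ (T.path v z).support) (hx : x ∈ (T.path v z).support) (hxv : x ≠ v) :
    w ∈ (T.path v x).support := by
  have e := T.path_cons_of_adj hpos hadj hw
  have hx' : x ∈ (T.path w z).support := by
    rw [e, SimpleGraph.Walk.support_cons] at hx
    rcases List.mem_cons.1 hx with h | h
    · exact absurd h hxv
    · exact h
  have hvnot : v ∉ (T.path w x).support := by
    intro hv
    have hsub := T.path_support_subset hx'
    have hmem : v ∈ (T.path w z).support := hsub hv
    have hnodup := (T.path_isPath v z).support_nodup
    rw [e, SimpleGraph.Walk.support_cons] at hnodup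
    exact (List.nodup_cons.1 hnodup).1 hmem
  have heq : T.path v x = SimpleGraph.Walk.cons hadj (T.path w x) :=
    (T.path_unique _ ((T.path_isPath w x).cons hvnot)).symm
  rw [heq, SimpleGraph.Walk.support_cons]
  exact List.mem_cons_of_mem _ (SimpleGraph.Walk.start_mem_support _)

lemma extend_path {v y z w : T.V} (hadj : T.G.Adj v w)
    (hwy : w ∉ (T.path v y).support) (hwz : w ∈ (T.path v z).support) :
    v ∈ (T.path y z).support := by
  have hint : ∀ x, x ∈ (T.path y v).support → x ∈ (T.path v z).support → x = v := by
    intro x h1 h2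
    by_contra hxv
    have h1' : x ∈ (T.path v y).support := T.mem_path_symm h1
    have hw' : w ∈ (T.path v x).support := T.adj_mem_sub hpos hadj hwz h2 hxv
    exact hwy (T.path_support_subset h1' hw')
  have hp : ((T.path y v).append (T.path v z)).IsPath :=
    T.isPath_append (T.path_isPath y v) (T.path_isPath v z) hint
  have heq := T.path_unique _ hp
  have hv : v ∈ ((T.path y v).append (T.path v z)).support := by
    rw [SimpleGraph.Walk.mem_support_append_iff]
    exact Or.inl (SimpleGraph.Walk.end_mem_support _)
  rw [heq] at hv; exact hv

end Struct2

lemma three_le_deg (hdeg : ∀ v, T.deg v ≠ 2)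
    (hleaf : ∀ v, T.deg v = 1 ↔ ∃ i, v = T.leaf i)
    {v : T.V} (hv : ¬ ∃ i, v = T.leaf i) : 3 ≤ T.deg v := by
  have hvl : v ≠ T.leaf 0 := fun h => hv ⟨0, h⟩
  obtain ⟨w, hadj, q, hq⟩ := SimpleGraph.Walk.exists_eq_cons_of_ne hvl (T.path v (T.leaf 0))
  have h0 : T.deg v ≠ 0 := by
    intro h0
    have hfin : (T.G.neighborSet v).Finite := Set.toFinite _
    have hempty := (Set.ncard_eq_zero hfin).1 h0
    have : w ∈ T.G.neighborSet v := hadj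
    rw [hempty] at this
    exact this
  have h1 : T.deg v ≠ 1 := fun h => hv ((hleaf v).1 h)
  have h2 := hdeg v
  omega

section Leaves

variable (hpos : ∀ e ∈ T.G.edgeSet, 0 < T.len e)
    (hdeg : ∀ v, T.deg v ≠ 2) (hleaf : ∀ v, T.deg v = 1 ↔ ∃ i, v = T.leaf i)
include hpos hdeg hleaf

lemma exists_leaf_through (u v : T.V) :
    ∃ i, u ∈ (T.path (T.leaf i) v).support := by
  by_cases huv : u = v
  · exact ⟨0, huv ▸ SimpleGraph.Walk.end_mem_support _⟩
  classical
  set S : Finset T.V := Finset.univ.filter (fun x => u ∈ (T.path x v).support) with hS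
  have huS : u ∈ S := by simp [hS, SimpleGraph.Walk.start_mem_support]
  obtain ⟨x, hxS, hmax⟩ := S.exists_max_image (fun x => T.dist v x) ⟨u, huS⟩
  have hxsupp : u ∈ (T.path x v).support := by
    have := hxS
    rw [hS, Finset.mem_filter] at this
    exact this.2
  by_cases hxleaf : ∃ i, x = T.leaf i
  · obtain ⟨i, rfl⟩ := hxleaf; exact ⟨i, hxsupp⟩
  exfalso
  have hxv : x ≠ v := by
    intro h
    have h1 : T.dist v u ≤ T.dist v x := hmax u huS
    have h2 : 0 < T.dist v u := T.dist_pos hpos (Ne.symm huv)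
    rw [h, T.dist_self] at h1
    linarith
  have hdeg3 : 3 ≤ T.deg x := T.three_le_deg hdeg hleaf hxleaf
  have h2 : 1 < (T.G.neighborSet x).ncard := by
    have : T.deg x = (T.G.neighborSet x).ncard := rfl
    omega
  obtain ⟨w₁, hw₁, w₂, hw₂, hww⟩ := (Set.one_lt_ncard (Set.toFinite _)).1 h2
  have hkey : ∃ w, T.G.Adj x w ∧ w ∉ (T.path x v).support := by
    by_cases hm1 : w₁ ∈ (T.path x v).support
    · by_cases hm2 : w₂ ∈ (T.path x v).support
      · exact absurd (T.adj_eq_of_mem_support hpos hw₁ hm1 hw₂ hm2) hww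
      · exact ⟨w₂, hw₂, hm2⟩
    · exact ⟨w₁, hw₁, hm1⟩
  obtain ⟨w, hadj, hwnot⟩ := hkey
  have hpw : T.path w v = SimpleGraph.Walk.cons hadj.symm (T.path x v) :=
    (T.path_unique _ ((T.path_isPath x v).cons hwnot)).symm
  have hwS : w ∈ S := by
    rw [hS, Finset.mem_filter]
    refine ⟨Finset.mem_univ _, ?_⟩
    rw [hpw, SimpleGraph.Walk.support_cons]
    exact List.mem_cons_of_mem _ hxsupp
  have hdw : T.dist v w = T.len s(w, x) + T.dist x v := by
    rw [T.dist_comm v w, T.dist_eq_wlen w v, hpw, T.dist_eq_wlen x v]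
    simp [wlen, SimpleGraph.Walk.edges_cons]
  have hlenpos : 0 < T.len s(w, x) := hpos _ hadj.symm
  have hle : T.dist v w ≤ T.dist v x := hmax w hwS
  have := T.dist_comm x v
  linarith [hle, hdw, hlenpos, T.dist_comm v x]

end Leaves

section Median

variable (hpos : ∀ e ∈ T.G.edgeSet, 0 < T.len e)
include hpos

lemma exists_median (a b c : T.V) :
    ∃ m, m ∈ (T.path a b).support ∧ m ∈ (T.path a c).support
      ∧ m ∈ (T.path b c).support := by
  classical
  set p := T.path b c with hp
  obtain ⟨m, hmS, hmin⟩ := (p.support.toFinset).exists_min_image (fun x => T.dist a x)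
    ⟨b, List.mem_toFinset.2 (SimpleGraph.Walk.start_mem_support _)⟩
  have hm : m ∈ p.support := List.mem_toFinset.1 hmS
  have hint : ∀ x, x ∈ (T.path a m).support → x ∈ p.support → x = m := by
    intro x h1 h2
    have e1 : T.dist a m = T.dist a x + T.dist x m := T.dist_add_of_mem h1
    have e2 : T.dist a m ≤ T.dist a x := hmin x (List.mem_toFinset.2 h2)
    have e3 : 0 ≤ T.dist x m := T.dist_nonneg x m
    exact (T.dist_eq_zero_iff hpos).1 (by linarith)
  have hsubdrop : (T.path m c).support ⊆ p.support := by
    rw [← T.path_drop hm]; exact SimpleGraph.Walk.support_dropUntil_subset p hm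
  have hsubtake : (T.path b m).support ⊆ p.support := by
    rw [← T.path_take hm]; exact SimpleGraph.Walk.support_takeUntil_subset p hm
  have hmac : m ∈ (T.path a c).support := by
    have hp1 : ((T.path a m).append (T.path m c)).IsPath := by
      apply T.isPath_append (T.path_isPath a m) (T.path_isPath m c)
      intro x h1 h2
      exact hint x h1 (hsubdrop h2)
    have heq := T.path_unique _ hp1
    have hv : m ∈ ((T.path a m).append (T.path m c)).support := by
      rw [SimpleGraph.Walk.mem_support_append_iff]
      exact Or.inl (SimpleGraph.Walk.end_mem_support _)
    rw [heq] at hv; exact hv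
  have hmab : m ∈ (T.path a b).support := by
    have hp1 : ((T.path a m).append (T.path m b)).IsPath := by
      apply T.isPath_append (T.path_isPath a m) (T.path_isPath m b)
      intro x h1 h2
      exact hint x h1 (hsubtake (T.mem_path_symm h2))
    have heq := T.path_unique _ hp1
    have hv : m ∈ ((T.path a m).append (T.path m b)).support := by
      rw [SimpleGraph.Walk.mem_support_append_iff]
      exact Or.inl (SimpleGraph.Walk.end_mem_support _)
    rw [heq] at hv; exact hv
  exact ⟨m, hmab, hmac, hm⟩

omit hpos in
lemma median_dist {a b c m : T.V} (h1 : m ∈ (T.path a b).support)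
    (h2 : m ∈ (T.path a c).support) (h3 : m ∈ (T.path b c).support) :
    T.dist a m = (T.dist a b + T.dist a c - T.dist b c) / 2 := by
  have e1 := T.dist_add_of_mem h1
  have e2 := T.dist_add_of_mem h2
  have e3 := T.dist_add_of_mem h3
  have c1 := T.dist_comm b m
  have c2 := T.dist_comm c m
  linarith

omit hpos in
lemma median_dist_pt {a b x m mx : T.V}
    (hm1 : m ∈ (T.path a b).support)
    (hx1 : mx ∈ (T.path a b).support) (hx2 : mx ∈ (T.path a x).support)
    (hx3 : mx ∈ (T.path b x).support) :
    T.dist x m = T.dist x mx + |T.dist a m - T.dist a mx| := by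
  rcases T.dist_ordering hx1 hm1 with hcase | hcase
  · -- d(a,m) = d(a,mx) + d(mx,m) : mx between a and m
    have habs : |T.dist a m - T.dist a mx| = T.dist mx m := by
      have hds : T.dist a m - T.dist a mx = T.dist mx m := by linarith
      rw [hds, abs_of_nonneg (T.dist_nonneg mx m)]
    rw [habs]
    have t1 := T.dist_triangle x mx m
    have t2 := T.dist_triangle x m b
    have hb := T.dist_add_of_mem hx3
    have e1 := T.dist_add_of_mem hm1
    have e2 := T.dist_add_of_mem hx1
    have c1 := T.dist_comm b x
    have c2 := T.dist_comm b mx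
    have c3 := T.dist_comm mx x
    have c4 := T.dist_comm m b
    have c5 := T.dist_comm mx m
    linarith
  · -- d(a,mx) = d(a,m) + d(m,mx) : m between a and mx
    have habs : |T.dist a m - T.dist a mx| = T.dist m mx := by
      have hds : T.dist a m - T.dist a mx = -(T.dist m mx) := by linarith
      rw [hds, abs_neg, abs_of_nonneg (T.dist_nonneg m mx)]
    rw [habs]
    have t1 := T.dist_triangle x mx m
    have t2 := T.dist_triangle a m x
    have ha := T.dist_add_of_mem hx2
    have c1 := T.dist_comm mx x
    have c2 := T.dist_comm m x
    have c3 := T.dist_comm mx m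
    linarith

lemma median_leaf_dist {a b c m : T.V}
    (h1 : m ∈ (T.path a b).support) (h2 : m ∈ (T.path a c).support)
    (h3 : m ∈ (T.path b c).support) (x : T.V) :
    T.dist x m = (T.dist x a + T.dist x b - T.dist a b) / 2
      + |(T.dist a b + T.dist a c - T.dist b c) / 2
          - (T.dist a b + T.dist a x - T.dist b x) / 2| := by
  obtain ⟨mx, g1, g2, g3⟩ := T.exists_median hpos a b x
  have hdx : T.dist x mx = (T.dist x a + T.dist x b - T.dist a b) / 2 :=
    T.median_dist (T.mem_path_symm g2) (T.mem_path_symm g3) g1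
  have hdm : T.dist a m = (T.dist a b + T.dist a c - T.dist b c) / 2 :=
    T.median_dist h1 h2 h3
  have hdmx : T.dist a mx = (T.dist a b + T.dist a x - T.dist b x) / 2 :=
    T.median_dist g1 g2 g3
  rw [← hdx, ← hdm, ← hdmx]
  exact T.median_dist_pt h1 g1 g2 g3

end Median

lemma dist_of_adj {u v : T.V} (h : T.G.Adj u v) : T.dist u v = T.len s(u, v) := by
  have hp : (SimpleGraph.Walk.cons h SimpleGraph.Walk.nil).IsPath := by
    refine SimpleGraph.Walk.IsPath.cons SimpleGraph.Walk.IsPath.nil ?_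
    simp [h.ne]
  rw [dist_eq_wlen, ← T.path_unique _ hp]
  simp [wlen]

lemma adj_iff_dist (hpos : ∀ e ∈ T.G.edgeSet, 0 < T.len e) {u v : T.V} :
    T.G.Adj u v ↔ u ≠ v
      ∧ ∀ w, T.dist u w + T.dist w v = T.dist u v → w = u ∨ w = v := by
  constructor
  · intro h
    refine ⟨h.ne, fun w hw => ?_⟩
    have hmem := T.mem_path_of_dist_eq hpos hw
    have hp : (SimpleGraph.Walk.cons h SimpleGraph.Walk.nil).IsPath := by
      refine SimpleGraph.Walk.IsPath.cons SimpleGraph.Walk.IsPath.nil ?_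
      simp [h.ne]
    have hpath : T.path u v = SimpleGraph.Walk.cons h SimpleGraph.Walk.nil :=
      (T.path_unique _ hp).symm
    rw [hpath] at hmem
    simp only [SimpleGraph.Walk.support_cons, SimpleGraph.Walk.support_nil] at hmem
    rcases List.mem_cons.1 hmem with h' | h'
    · exact Or.inl h'
    · simp at h'
      exact Or.inr h'
  · rintro ⟨hne, hw⟩
    obtain ⟨x, hadj, q, hq⟩ := SimpleGraph.Walk.exists_eq_cons_of_ne hne (T.path u v)
    by_cases hxv : x = v
    · subst hxv; exact hadj
    · exfalso
      have hxsupp : x ∈ (T.path u v).support := by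
        rw [hq, SimpleGraph.Walk.support_cons]
        exact List.mem_cons_of_mem _ (SimpleGraph.Walk.start_mem_support _)
      have hadd := T.dist_add_of_mem hxsupp
      rcases hw x (by linarith) with h' | h'
      · exact hadj.ne' h'
      · exact hxv h'

section Frame

variable (hpos : ∀ e ∈ T.G.edgeSet, 0 < T.len e)
    (hdeg : ∀ v, T.deg v ≠ 2) (hleaf : ∀ v, T.deg v = 1 ↔ ∃ i, v = T.leaf i)
include hpos hdeg hleaf

lemma exists_leaf_frame (u v : T.V) :
    ∃ i j, T.dist (T.leaf i) (T.leaf j)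
      = T.dist (T.leaf i) u + T.dist u v + T.dist v (T.leaf j) := by
  by_cases huv : u = v
  · subst huv
    obtain ⟨i, hi⟩ := T.exists_leaf_through hpos hdeg hleaf u (T.leaf 0)
    refine ⟨i, 0, ?_⟩
    have hadd := T.dist_add_of_mem hi
    rw [T.dist_self]
    linarith
  obtain ⟨i, hi⟩ := T.exists_leaf_through hpos hdeg hleaf u v
  obtain ⟨j, hj⟩ := T.exists_leaf_through hpos hdeg hleaf v u
  have hiv : T.dist (T.leaf i) v = T.dist (T.leaf i) u + T.dist u v :=
    T.dist_add_of_mem hi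
  have hvmem : v ∈ (T.path u (T.leaf j)).support := T.mem_path_symm hj
  have hint : ∀ x, x ∈ (T.path (T.leaf i) v).support
      → x ∈ (T.path v (T.leaf j)).support → x = v := by
    intro x h1 h2
    have hsplit : x ∈ (T.path (T.leaf i) u).support ∨ x ∈ (T.path u v).support := by
      have h1' := h1
      rw [← SimpleGraph.Walk.take_spec (T.path (T.leaf i) v) hi,
        SimpleGraph.Walk.mem_support_append_iff] at h1'
      rw [T.path_take hi, T.path_drop hi] at h1'
      exact h1'
    rcases hsplit with hx | hx
    · exfalso
      have f1 : T.dist (T.leaf i) u = T.dist (T.leaf i) x + T.dist x u :=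
        T.dist_add_of_mem hx
      have f2 : T.dist (T.leaf i) v = T.dist (T.leaf i) x + T.dist x v :=
        T.dist_add_of_mem (T.path_support_subset hi hx)
      have f3 : T.dist x u + T.dist u v = T.dist x v := by linarith
      have f4 : u ∈ (T.path x v).support := T.mem_path_of_dist_eq hpos f3
      have f5 : u ∈ (T.path v x).support := T.mem_path_symm f4
      have f8 : u ∈ (T.path v (T.leaf j)).support := T.path_support_subset h2 f5
      have f9 : T.dist v (T.leaf j) = T.dist v u + T.dist u (T.leaf j) :=
        T.dist_add_of_mem f8
      have f10 : T.dist u (T.leaf j) = T.dist u v + T.dist v (T.leaf j) :=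
        T.dist_add_of_mem hvmem
      have hp' : 0 < T.dist u v := T.dist_pos hpos huv
      have c2 := T.dist_comm v u
      linarith
    · exact T.eq_of_mem_both hvmem hx h2
  have hp1 : ((T.path (T.leaf i) v).append (T.path v (T.leaf j))).IsPath :=
    T.isPath_append (T.path_isPath _ _) (T.path_isPath _ _) hint
  have heq := T.path_unique _ hp1
  have hsum : T.dist (T.leaf i) (T.leaf j)
      = T.dist (T.leaf i) v + T.dist v (T.leaf j) := by
    rw [T.dist_eq_wlen (T.leaf i) (T.leaf j), ← heq, T.wlen_append,
      ← T.dist_eq_wlen, ← T.dist_eq_wlen]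
  exact ⟨i, j, by linarith⟩

lemma eq_of_leaf_dists {x y : T.V}
    (h : ∀ l, T.dist (T.leaf l) x = T.dist (T.leaf l) y) : x = y := by
  obtain ⟨i, j, hij⟩ := T.exists_leaf_frame hpos hdeg hleaf x y
  have t : T.dist (T.leaf i) (T.leaf j) ≤ T.dist (T.leaf i) y + T.dist y (T.leaf j) :=
    T.dist_triangle _ _ _
  have hx0 : T.dist x y ≤ 0 := by
    have hi := h i
    linarith
  exact (T.dist_eq_zero_iff hpos).1 (le_antisymm hx0 (T.dist_nonneg x y))

lemma exists_median_leaves (v : T.V) :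
    ∃ i j k, v ∈ (T.path (T.leaf i) (T.leaf j)).support
      ∧ v ∈ (T.path (T.leaf i) (T.leaf k)).support
      ∧ v ∈ (T.path (T.leaf j) (T.leaf k)).support := by
  obtain ⟨i, hi⟩ := T.exists_leaf_through hpos hdeg hleaf v (T.leaf 0)
  by_cases hvleaf : ∃ t, v = T.leaf t
  · obtain ⟨t, rfl⟩ := hvleaf
    exact ⟨i, 0, t, hi, SimpleGraph.Walk.end_mem_support _,
      SimpleGraph.Walk.end_mem_support _⟩
  have hdeg3 := T.three_le_deg hdeg hleaf hvleaf
  have h2 : 2 < (T.G.neighborSet v).ncard := by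
    have hd : T.deg v = (T.G.neighborSet v).ncard := rfl
    omega
  obtain ⟨w₁, hw₁, w₂, hw₂, w₃, hw₃, h12, h13, h23⟩ :=
    (Set.two_lt_ncard (Set.toFinite _)).1 h2
  have hkey : ∃ w, T.G.Adj v w ∧ w ∉ (T.path v (T.leaf i)).support
      ∧ w ∉ (T.path v (T.leaf 0)).support := by
    by_contra hcon
    push_neg at hcon
    have c1 := hcon w₁ hw₁
    have c2 := hcon w₂ hw₂
    have c3 := hcon w₃ hw₃
    by_cases a1 : w₁ ∈ (T.path v (T.leaf i)).support <;>
      by_cases a2 : w₂ ∈ (T.path v (T.leaf i)).support <;>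
        by_cases a3 : w₃ ∈ (T.path v (T.leaf i)).support <;>
          first
            | exact h12 (T.adj_eq_of_mem_support hpos hw₁ a1 hw₂ a2)
            | exact h13 (T.adj_eq_of_mem_support hpos hw₁ a1 hw₃ a3)
            | exact h23 (T.adj_eq_of_mem_support hpos hw₂ a2 hw₃ a3)
            | exact h12 (T.adj_eq_of_mem_support hpos hw₁ (c1 a1) hw₂ (c2 a2))
            | exact h13 (T.adj_eq_of_mem_support hpos hw₁ (c1 a1) hw₃ (c3 a3))
            | exact h23 (T.adj_eq_of_mem_support hpos hw₂ (c2 a2) hw₃ (c3 a3))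
  obtain ⟨w, hadj, hwi, hw0⟩ := hkey
  obtain ⟨k, hk⟩ := T.exists_leaf_through hpos hdeg hleaf w v
  have hwc : w ∈ (T.path v (T.leaf k)).support := T.mem_path_symm hk
  have m1 : v ∈ (T.path (T.leaf i) (T.leaf k)).support :=
    T.extend_path hpos hadj hwi hwc
  have m2 : v ∈ (T.path (T.leaf 0) (T.leaf k)).support :=
    T.extend_path hpos hadj hw0 hwc
  exact ⟨i, 0, k, hi, m1, m2⟩

end Frame

end MetricTree

theorem stmt2 {n : ℕ} (hn : 2 ≤ n) (T₁ T₂ : MetricTree n)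
    (hpos₁ : ∀ e ∈ T₁.G.edgeSet, 0 < T₁.len e)
    (hpos₂ : ∀ e ∈ T₂.G.edgeSet, 0 < T₂.len e)
    (hdeg₁ : ∀ v, T₁.deg v ≠ 2) (hdeg₂ : ∀ v, T₂.deg v ≠ 2)
    (hleaf₁ : ∀ v, T₁.deg v = 1 ↔ ∃ i, v = T₁.leaf i)
    (hleaf₂ : ∀ v, T₂.deg v = 1 ↔ ∃ i, v = T₂.leaf i)
    (hdist : ∀ i j, T₁.dist (T₁.leaf i) (T₁.leaf j) = T₂.dist (T₂.leaf i) (T₂.leaf j)) :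
    T₁.Isom T₂ := by
  classical
  have med1 := fun v : T₁.V => T₁.exists_median_leaves hpos₁ hdeg₁ hleaf₁ v
  choose i1 j1 k1 hm1 hm2 hm3 using med1
  have med2 := fun v : T₁.V =>
    T₂.exists_median hpos₂ (T₂.leaf (i1 v)) (T₂.leaf (j1 v)) (T₂.leaf (k1 v))
  choose φ hφ1 hφ2 hφ3 using med2
  have med1' := fun w : T₂.V => T₂.exists_median_leaves hpos₂ hdeg₂ hleaf₂ w
  choose i2 j2 k2 hn1 hn2 hn3 using med1'
  have med2' := fun w : T₂.V =>
    T₁.exists_median hpos₁ (T₁.leaf (i2 w)) (T₁.leaf (j2 w)) (T₁.leaf (k2 w))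
  choose ψ hψ1 hψ2 hψ3 using med2'
  -- leaf-distance preservation
  have key : ∀ (v : T₁.V) (l : Fin (n + 1)),
      T₂.dist (T₂.leaf l) (φ v) = T₁.dist (T₁.leaf l) v := by
    intro v l
    have e1 := T₁.median_leaf_dist hpos₁ (hm1 v) (hm2 v) (hm3 v) (T₁.leaf l)
    have e2 := T₂.median_leaf_dist hpos₂ (hφ1 v) (hφ2 v) (hφ3 v) (T₂.leaf l)
    rw [e1, e2]
    simp only [hdist]
  have key2 : ∀ (w : T₂.V) (l : Fin (n + 1)),
      T₁.dist (T₁.leaf l) (ψ w) = T₂.dist (T₂.leaf l) w := by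
    intro w l
    have e1 := T₂.median_leaf_dist hpos₂ (hn1 w) (hn2 w) (hn3 w) (T₂.leaf l)
    have e2 := T₁.median_leaf_dist hpos₁ (hψ1 w) (hψ2 w) (hψ3 w) (T₁.leaf l)
    rw [e1, e2]
    simp only [hdist]
  -- φ and ψ are mutually inverse
  have linv : ∀ v, ψ (φ v) = v := by
    intro v
    apply T₁.eq_of_leaf_dists hpos₁ hdeg₁ hleaf₁
    intro l
    rw [key2, key]
  have rinv : ∀ w, φ (ψ w) = w := by
    intro w
    apply T₂.eq_of_leaf_dists hpos₂ hdeg₂ hleaf₂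
    intro l
    rw [key, key2]
  -- φ preserves leaves
  have hleafmap : ∀ t, φ (T₁.leaf t) = T₂.leaf t := by
    intro t
    apply T₂.eq_of_leaf_dists hpos₂ hdeg₂ hleaf₂
    intro l
    rw [key]
    exact hdist l t
  -- φ preserves all distances
  have dpres : ∀ u v, T₂.dist (φ u) (φ v) = T₁.dist u v := by
    intro u v
    obtain ⟨i, j, hij⟩ := T₁.exists_leaf_frame hpos₁ hdeg₁ hleaf₁ u v
    obtain ⟨i', j', hij'⟩ := T₂.exists_leaf_frame hpos₂ hdeg₂ hleaf₂ (φ u) (φ v)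
    have r1 : T₂.dist (T₂.leaf i) (φ u) = T₁.dist (T₁.leaf i) u := key u i
    have r2 : T₂.dist (φ v) (T₂.leaf j) = T₁.dist v (T₁.leaf j) := by
      rw [T₂.dist_comm, key, T₁.dist_comm]
    have r1' : T₂.dist (T₂.leaf i') (φ u) = T₁.dist (T₁.leaf i') u := key u i'
    have r2' : T₂.dist (φ v) (T₂.leaf j') = T₁.dist v (T₁.leaf j') := by
      rw [T₂.dist_comm, key, T₁.dist_comm]
    have hd := hdist i j
    have hd' := hdist i' j'
    have a1 := T₂.dist_triangle (T₂.leaf i) (φ u) (T₂.leaf j)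
    have a2 := T₂.dist_triangle (φ u) (φ v) (T₂.leaf j)
    have b1 := T₁.dist_triangle (T₁.leaf i') u (T₁.leaf j')
    have b2 := T₁.dist_triangle u v (T₁.leaf j')
    linarith
  -- adjacency transfer
  have hadjiff : ∀ a b : T₁.V, T₁.G.Adj a b ↔ T₂.G.Adj (φ a) (φ b) := by
    intro a b
    rw [T₁.adj_iff_dist hpos₁, T₂.adj_iff_dist hpos₂]
    constructor
    · rintro ⟨hne, hcond⟩
      constructor
      · intro h
        have h' := congrArg ψ h
        rw [linv, linv] at h'
        exact hne h'
      · intro w hw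
        have e1 : T₂.dist (φ a) w = T₁.dist a (ψ w) := by
          conv_lhs => rw [← rinv w]
          exact dpres a (ψ w)
        have e2 : T₂.dist w (φ b) = T₁.dist (ψ w) b := by
          conv_lhs => rw [← rinv w]
          exact dpres (ψ w) b
        rw [e1, e2, dpres] at hw
        rcases hcond (ψ w) hw with h' | h'
        · left; rw [← rinv w, h']
        · right; rw [← rinv w, h']
    · rintro ⟨hne, hcond⟩
      constructor
      · intro h; exact hne (by rw [h])
      · intro w hw
        have hw' : T₂.dist (φ a) (φ w) + T₂.dist (φ w) (φ b) = T₂.dist (φ a) (φ b) := by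
          rw [dpres, dpres, dpres]; exact hw
        rcases hcond (φ w) hw' with h' | h'
        · left
          have := congrArg ψ h'
          rwa [linv, linv] at this
        · right
          have := congrArg ψ h'
          rwa [linv, linv] at this
  -- edge lengths
  have hlen : ∀ a b, T₁.G.Adj a b → T₁.len s(a, b) = T₂.len s(φ a, φ b) := by
    intro a b h
    have h2 : T₂.G.Adj (φ a) (φ b) := (hadjiff a b).1 h
    rw [← T₁.dist_of_adj h, ← T₂.dist_of_adj h2, dpres]
  exact ⟨⟨φ, ψ, linv, rinv⟩, hadjiff, hlen, hleafmap⟩
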